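/- Let X be a one-dimensional Peano continuum, Y ⊆ X a subcontinuum containing the core of X, and r : X → Y the first point map. If α is a path in X from a point x ∈ X \ Y to a point y ∈ Y, then r(image(α)) ⊆ image(α). -/

import Mathlib

open unitInterval

/-- Covering dimension at most `n`: every open cover admits an open refinement
in which each point lies in at most `n + 1` members. -/
def CovDimLE (X : Type*) [TopologicalSpace X] (n : ℕ) : Prop :=
  ∀ U : Set (Set X), (∀ u ∈ U, IsOpen u) → ⋃₀ U = Set.univ →
    ∃ V : Set (Set X), (∀ v ∈ V, IsOpen v) ∧ ⋃₀ V = Set.univ ∧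
      (∀ v ∈ V, ∃ u ∈ U, v ⊆ u) ∧
      ∀ x : X, {v ∈ V | x ∈ v}.Finite ∧ {v ∈ V | x ∈ v}.ncard ≤ n + 1

/-- `Y` is a strong deformation retract of `X`: there is a homotopy from the
identity to a retraction onto `Y` fixing `Y` at all times. -/
def IsStrongDeformationRetract (X : Type*) [TopologicalSpace X] (Y : Set X) : Prop :=
  ∃ H : C(I × X, X),
    (∀ x, H (0, x) = x) ∧ (∀ x, H (1, x) ∈ Y) ∧ ∀ t, ∀ y ∈ Y, H (t, y) = y

/-- `Y` is a deformation retract of `X`: there is a homotopy from the identity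
to a retraction onto `Y`. -/
def IsDeformationRetractSet (X : Type*) [TopologicalSpace X] (Y : Set X) : Prop :=
  ∃ H : C(I × X, X),
    (∀ x, H (0, x) = x) ∧ (∀ x, H (1, x) ∈ Y) ∧ ∀ y ∈ Y, H (1, y) = y


section ArcExtraction

open Set

variable {X : Type} [MetricSpace X]

/-- The family of closed subsets of `[0,1]` containing the endpoints such that the
endpoints of every "gap" have equal `P`-values. -/
def pathFam (P : ℝ → X) : Set (Set ℝ) :=
  {K | K ⊆ Icc 0 1 ∧ IsClosed K ∧ 0 ∈ K ∧ 1 ∈ K ∧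
    ∀ a ∈ K, ∀ b ∈ K, a < b → K ∩ Ioo a b = ∅ → P a = P b}

lemma pathFam_sInter_mem {P : ℝ → X} (hP : Continuous P) (c : Set (Set ℝ))
    (hc : c ⊆ pathFam P) (hchain : IsChain (· ⊆ ·) c) (hne : c.Nonempty) :
    ⋂₀ c ∈ pathFam P := by
  obtain ⟨J0, hJ0⟩ := hne
  have hsub : ∀ J ∈ c, ⋂₀ c ⊆ J := fun J hJ => sInter_subset_of_mem hJ
  refine ⟨(hsub J0 hJ0).trans (hc hJ0).1, isClosed_sInter fun J hJ => (hc hJ).2.1,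
    mem_sInter.2 fun J hJ => (hc hJ).2.2.1, mem_sInter.2 fun J hJ => (hc hJ).2.2.2.1, ?_⟩
  intro a ha b hb hab hgap
  set m : ℝ := (a + b) / 2 with hm_def
  have ham : a < m := by simp only [hm_def]; linarith
  have hmb : m < b := by simp only [hm_def]; linarith
  have hmK : m ∉ ⋂₀ c := by
    intro h
    have : m ∈ ⋂₀ c ∩ Ioo a b := ⟨h, ham, hmb⟩
    rw [hgap] at this
    exact this
  obtain ⟨K₀, hK₀c, hmK₀⟩ : ∃ J ∈ c, m ∉ J := by
    by_contra h
    push_neg at h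
    exact hmK (mem_sInter.2 h)
  set A : Set ℝ → ℝ := fun J => sSup (J ∩ Icc a m) with hA_def
  set B : Set ℝ → ℝ := fun J => sInf (J ∩ Icc m b) with hB_def
  set c' : Set (Set ℝ) := {J ∈ c | m ∉ J} with hc'_def
  have hK₀c' : K₀ ∈ c' := ⟨hK₀c, hmK₀⟩
  -- basic facts about A J, B J for J ∈ c'
  have haJ : ∀ J ∈ c, a ∈ J ∩ Icc a m := fun J hJ => ⟨mem_sInter.1 ha J hJ, le_refl a, ham.le⟩
  have hbJ : ∀ J ∈ c, b ∈ J ∩ Icc m b := fun J hJ => ⟨mem_sInter.1 hb J hJ, hmb.le, le_refl b⟩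
  have hAbdd : ∀ J : Set ℝ, BddAbove (J ∩ Icc a m) :=
    fun J => (bddAbove_Icc (a := a) (b := m)).mono inter_subset_right
  have hBbdd : ∀ J : Set ℝ, BddBelow (J ∩ Icc m b) :=
    fun J => (bddBelow_Icc (a := b) (b := m)).mono inter_subset_right
  have hAmem : ∀ J ∈ c, A J ∈ J ∩ Icc a m := by
    intro J hJ
    exact ((hc hJ).2.1.inter isClosed_Icc).csSup_mem ⟨a, haJ J hJ⟩ (hAbdd J)
  have hBmem : ∀ J ∈ c, B J ∈ J ∩ Icc m b := by
    intro J hJ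
    exact ((hc hJ).2.1.inter isClosed_Icc).csInf_mem ⟨b, hbJ J hJ⟩ (hBbdd J)
  have hAlt : ∀ J ∈ c', A J < m := by
    intro J hJ
    rcases lt_or_eq_of_le (hAmem J hJ.1).2.2 with h | h
    · exact h
    · exact absurd (h ▸ (hAmem J hJ.1).1) hJ.2
  have hBgt : ∀ J ∈ c', m < B J := by
    intro J hJ
    rcases lt_or_eq_of_le (hBmem J hJ.1).2.1 with h | h
    · exact h
    · exact absurd (h ▸ (hBmem J hJ.1).1) hJ.2
  have hPAB : ∀ J ∈ c', P (A J) = P (B J) := by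
    intro J hJ
    refine (hc hJ.1).2.2.2.2 (A J) (hAmem J hJ.1).1 (B J) (hBmem J hJ.1).1
      ((hAlt J hJ).trans (hBgt J hJ)) ?_
    ext x
    simp only [mem_inter_iff, mem_Ioo, mem_empty_iff_false, iff_false, not_and]
    intro hxJ h1 h2
    rcases le_or_gt x m with hxm | hxm
    · exact absurd (le_csSup (hAbdd J) ⟨hxJ, (hAmem J hJ.1).2.1.trans h1.le, hxm⟩)
        (not_le.2 h1)
    · exact absurd (csInf_le (hBbdd J) ⟨hxJ, hxm.le, h2.le.trans (hBmem J hJ.1).2.2⟩)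
        (not_le.2 h2)
  -- monotonicity
  have hAmono : ∀ J ∈ c, ∀ J' ∈ c, J ⊆ J' → A J ≤ A J' := by
    intro J hJ J' hJ' hsub'
    exact csSup_le_csSup (hAbdd J') ⟨a, haJ J hJ⟩ (inter_subset_inter_left _ hsub')
  have hBmono : ∀ J ∈ c, ∀ J' ∈ c, J ⊆ J' → B J' ≤ B J := by
    intro J hJ J' hJ' hsub'
    exact csInf_le_csInf (hBbdd J') ⟨b, hbJ J hJ⟩ (inter_subset_inter_left _ hsub')
  -- the infimum of the A J over the chain is a
  set T : Set ℝ := A '' c' with hT_def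
  have hTne : T.Nonempty := ⟨A K₀, mem_image_of_mem _ hK₀c'⟩
  have hTlb : ∀ x ∈ T, a ≤ x := by
    rintro x ⟨J, hJ, rfl⟩
    exact le_csSup (hAbdd J) (haJ J hJ.1)
  have hTbdd : BddBelow T := ⟨a, hTlb⟩
  have hTK : sInf T ∈ ⋂₀ c := by
    intro J₁ hJ₁
    have hJ₁cl : IsClosed J₁ := (hc hJ₁).2.1
    by_cases hm₁ : m ∈ J₁
    · have hTJ : T ⊆ J₁ := by
        rintro x ⟨J, hJ, rfl⟩
        rcases hchain.total hJ.1 hJ₁ with h | h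
        · exact h (hAmem J hJ.1).1
        · exact absurd (h hm₁) hJ.2
      have := csInf_mem_closure hTne hTbdd
      exact hJ₁cl.closure_eq ▸ closure_mono hTJ this
    · have hJ₁c' : J₁ ∈ c' := ⟨hJ₁, hm₁⟩
      set T₁ : Set ℝ := T ∩ J₁ with hT₁_def
      have hT₁ne : T₁.Nonempty := ⟨A J₁, mem_image_of_mem _ hJ₁c', (hAmem J₁ hJ₁).1⟩
      have hT₁bdd : BddBelow T₁ := hTbdd.mono inter_subset_left
      have hinf_eq : sInf T = sInf T₁ := by
        refine le_antisymm (csInf_le_csInf hTbdd hT₁ne inter_subset_left) ?_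
        refine le_csInf hTne ?_
        rintro x ⟨J, hJ, rfl⟩
        rcases hchain.total hJ.1 hJ₁ with h | h
        · exact csInf_le hT₁bdd ⟨mem_image_of_mem _ hJ, h (hAmem J hJ.1).1⟩
        · exact le_trans (csInf_le hT₁bdd ⟨mem_image_of_mem _ hJ₁c', (hAmem J₁ hJ₁).1⟩)
            (hAmono J₁ hJ₁ J hJ.1 h)
      rw [hinf_eq]
      have := csInf_mem_closure hT₁ne hT₁bdd
      exact hJ₁cl.closure_eq ▸ closure_mono inter_subset_right this
  have hTa : sInf T = a := by
    refine le_antisymm ?_ (le_csInf hTne hTlb)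
    by_contra h
    push_neg at h
    have h1 : sInf T ≤ A K₀ := csInf_le hTbdd (mem_image_of_mem _ hK₀c')
    have : sInf T ∈ (⋂₀ c) ∩ Ioo a b :=
      ⟨hTK, h, lt_trans (lt_of_le_of_lt h1 (hAlt K₀ hK₀c')) hmb⟩
    rw [hgap] at this
    exact this
  -- the supremum of the B J over the chain is b
  set T' : Set ℝ := B '' c' with hT'_def
  have hT'ne : T'.Nonempty := ⟨B K₀, mem_image_of_mem _ hK₀c'⟩
  have hT'ub : ∀ x ∈ T', x ≤ b := by
    rintro x ⟨J, hJ, rfl⟩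
    exact csInf_le (hBbdd J) (hbJ J hJ.1)
  have hT'bdd : BddAbove T' := ⟨b, hT'ub⟩
  have hT'K : sSup T' ∈ ⋂₀ c := by
    intro J₁ hJ₁
    have hJ₁cl : IsClosed J₁ := (hc hJ₁).2.1
    by_cases hm₁ : m ∈ J₁
    · have hTJ : T' ⊆ J₁ := by
        rintro x ⟨J, hJ, rfl⟩
        rcases hchain.total hJ.1 hJ₁ with h | h
        · exact h (hBmem J hJ.1).1
        · exact absurd (h hm₁) hJ.2
      have := csSup_mem_closure hT'ne hT'bdd
      exact hJ₁cl.closure_eq ▸ closure_mono hTJ this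
    · have hJ₁c' : J₁ ∈ c' := ⟨hJ₁, hm₁⟩
      set T₁ : Set ℝ := T' ∩ J₁ with hT₁_def
      have hT₁ne : T₁.Nonempty := ⟨B J₁, mem_image_of_mem _ hJ₁c', (hBmem J₁ hJ₁).1⟩
      have hT₁bdd : BddAbove T₁ := hT'bdd.mono inter_subset_left
      have hsup_eq : sSup T' = sSup T₁ := by
        refine le_antisymm ?_ (csSup_le_csSup hT'bdd hT₁ne inter_subset_left)
        refine csSup_le hT'ne ?_
        rintro x ⟨J, hJ, rfl⟩
        rcases hchain.total hJ.1 hJ₁ with h | h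
        · exact le_csSup hT₁bdd ⟨mem_image_of_mem _ hJ, h (hBmem J hJ.1).1⟩
        · exact le_trans (hBmono J₁ hJ₁ J hJ.1 h)
            (le_csSup hT₁bdd ⟨mem_image_of_mem _ hJ₁c', (hBmem J₁ hJ₁).1⟩)
      rw [hsup_eq]
      have := csSup_mem_closure hT₁ne hT₁bdd
      exact hJ₁cl.closure_eq ▸ closure_mono inter_subset_right this
  have hT'b : sSup T' = b := by
    refine le_antisymm (csSup_le hT'ne hT'ub) ?_
    by_contra h
    push_neg at h
    have h1 : B K₀ ≤ sSup T' := le_csSup hT'bdd (mem_image_of_mem _ hK₀c')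
    have : sSup T' ∈ (⋂₀ c) ∩ Ioo a b :=
      ⟨hT'K, lt_trans ham (lt_of_lt_of_le (hBgt K₀ hK₀c') h1), h⟩
    rw [hgap] at this
    exact this
  -- ε-argument
  refine eq_of_dist_eq_zero (le_antisymm ?_ dist_nonneg)
  refine le_of_forall_pos_le_add ?_
  intro ε hε
  rw [zero_add]
  obtain ⟨δa, hδa, hδa'⟩ := Metric.continuous_iff.1 hP a (ε / 2) (by linarith)
  obtain ⟨δb, hδb, hδb'⟩ := Metric.continuous_iff.1 hP b (ε / 2) (by linarith)
  obtain ⟨x₁, hx₁T, hx₁⟩ : ∃ x ∈ T, x < a + δa := by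
    refine exists_lt_of_csInf_lt hTne ?_
    rw [hTa]; linarith
  obtain ⟨x₂, hx₂T, hx₂⟩ : ∃ x ∈ T', b - δb < x := by
    refine exists_lt_of_lt_csSup hT'ne ?_
    rw [hT'b]; linarith
  obtain ⟨J₁, hJ₁, rfl⟩ := hx₁T
  obtain ⟨J₂, hJ₂, rfl⟩ := hx₂T
  obtain ⟨J, hJ, hAJ, hBJ⟩ : ∃ J ∈ c', A J < a + δa ∧ b - δb < B J := by
    rcases hchain.total hJ₁.1 hJ₂.1 with h | h
    · exact ⟨J₁, hJ₁, hx₁, lt_of_lt_of_le hx₂ (hBmono J₁ hJ₁.1 J₂ hJ₂.1 h)⟩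
    · exact ⟨J₂, hJ₂, lt_of_le_of_lt (hAmono J₂ hJ₂.1 J₁ hJ₁.1 h) hx₁, hx₂⟩
  have hd1 : dist (P (A J)) (P a) < ε / 2 := by
    refine hδa' _ ?_
    rw [Real.dist_eq, abs_sub_lt_iff]
    constructor
    · linarith [hTlb (A J) (mem_image_of_mem _ hJ)]
    · linarith [hTlb (A J) (mem_image_of_mem _ hJ)]
  have hd2 : dist (P (B J)) (P b) < ε / 2 := by
    refine hδb' _ ?_
    rw [Real.dist_eq, abs_sub_lt_iff]
    constructor
    · linarith [hT'ub (B J) (mem_image_of_mem _ hJ)]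
    · linarith [hT'ub (B J) (mem_image_of_mem _ hJ)]
  calc dist (P a) (P b) ≤ dist (P a) (P (A J)) + dist (P (A J)) (P b) := dist_triangle _ _ _
    _ = dist (P a) (P (A J)) + dist (P (B J)) (P b) := by rw [hPAB J hJ]
    _ ≤ ε := by rw [dist_comm (P a)]; linarith

lemma pathFam_exists_minimal {P : ℝ → X} (hP : Continuous P) :
    ∃ K ∈ pathFam P, ∀ K' ∈ pathFam P, K' ⊆ K → K' = K := by
  have hIcc : Icc (0:ℝ) 1 ∈ pathFam P := by
    refine ⟨subset_rfl, isClosed_Icc, ⟨le_refl 0, zero_le_one⟩, ⟨zero_le_one, le_refl 1⟩, ?_⟩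
    intro a ha b hb hab hgap
    exfalso
    have hm : (a + b) / 2 ∈ Icc (0:ℝ) 1 ∩ Ioo a b := by
      constructor
      · constructor
        · linarith [ha.1, hb.1]
        · linarith [ha.2, hb.2]
      · constructor <;> linarith
    rw [hgap] at hm
    exact hm
  obtain ⟨m, -, hmin⟩ := zorn_superset_nonempty (pathFam P)
    (fun c hc hchain hne => ⟨⋂₀ c, pathFam_sInter_mem hP c hc hchain hne,
      fun s hs => sInter_subset_of_mem hs⟩) _ hIcc
  exact ⟨m, hmin.1, fun K' hK' hsub => le_antisymm hsub (hmin.2 hK' hsub)⟩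

/-- `rhoK K t` : the last point of `K` before `t`. -/
noncomputable def rhoK (K : Set ℝ) (t : ℝ) : ℝ := sSup (K ∩ Iic t)

/-- `sigK K t` : the first point of `K` after `t`. -/
noncomputable def sigK (K : Set ℝ) (t : ℝ) : ℝ := sInf (K ∩ Ici t)

section KFacts

variable {P : ℝ → X} {K : Set ℝ} (hK : K ∈ pathFam P)
include hK

lemma rhoK_mem {t : ℝ} (ht : 0 ≤ t) : rhoK K t ∈ K ∧ rhoK K t ≤ t := by
  have hne : (K ∩ Iic t).Nonempty := ⟨0, hK.2.2.1, ht⟩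
  have hbdd : BddAbove (K ∩ Iic t) := bddAbove_Iic.mono inter_subset_right
  have hmem := (hK.2.1.inter isClosed_Iic).csSup_mem hne hbdd
  exact ⟨hmem.1, hmem.2⟩

lemma le_rhoK {t x : ℝ} (hx : x ∈ K) (hxt : x ≤ t) : x ≤ rhoK K t :=
  le_csSup (bddAbove_Iic.mono inter_subset_right) ⟨hx, hxt⟩

lemma sigK_mem {t : ℝ} (ht : t ≤ 1) : sigK K t ∈ K ∧ t ≤ sigK K t := by
  have hne : (K ∩ Ici t).Nonempty := ⟨1, hK.2.2.2.1, ht⟩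
  have hbdd : BddBelow (K ∩ Ici t) := bddBelow_Ici.mono inter_subset_right
  have hmem := (hK.2.1.inter isClosed_Ici).csInf_mem hne hbdd
  exact ⟨hmem.1, hmem.2⟩

lemma sigK_le {t x : ℝ} (hx : x ∈ K) (hxt : t ≤ x) : sigK K t ≤ x :=
  csInf_le (bddBelow_Ici.mono inter_subset_right) ⟨hx, hxt⟩

lemma rhoK_self {t : ℝ} (ht : t ∈ K) : rhoK K t = t :=
  le_antisymm (rhoK_mem hK (hK.1 ht).1).2 (le_rhoK hK ht le_rfl)

lemma sigK_self {t : ℝ} (ht : t ∈ K) : sigK K t = t :=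
  le_antisymm (sigK_le hK ht le_rfl) (sigK_mem hK (hK.1 ht).2).2

/-- no points of `K` strictly between `rhoK K t` and `sigK K t`. -/
lemma gap_rho_sig {t x : ℝ} (ht : t ∈ Icc (0:ℝ) 1) (hx : x ∈ K)
    (h1 : rhoK K t < x) (h2 : x < sigK K t) : False := by
  rcases le_or_gt x t with h | h
  · exact absurd (le_rhoK hK hx h) (not_le.2 h1)
  · exact absurd (sigK_le hK hx h.le) (not_le.2 h2)

lemma P_rho_eq_sig {t : ℝ} (ht : t ∈ Icc (0:ℝ) 1) : P (rhoK K t) = P (sigK K t) := by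
  rcases eq_or_lt_of_le ((rhoK_mem hK ht.1).2.trans (sigK_mem hK ht.2).2) with h | h
  · rw [h]
  · refine hK.2.2.2.2 _ (rhoK_mem hK ht.1).1 _ (sigK_mem hK ht.2).1 h ?_
    ext x
    simp only [mem_inter_iff, mem_Ioo, mem_empty_iff_false, iff_false, not_and]
    intro hx h1 h2
    exact gap_rho_sig hK ht hx h1 h2

lemma g_continuousOn (hP : Continuous P) :
    ContinuousOn (fun t => P (rhoK K t)) (Icc (0:ℝ) 1) := by
  intro t₀ ht₀
  rw [Metric.continuousWithinAt_iff]
  intro ε hε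
  by_cases ht₀K : t₀ ∈ K
  · obtain ⟨δ, hδ, hδ'⟩ := Metric.continuous_iff.1 hP t₀ ε hε
    refine ⟨δ, hδ, ?_⟩
    intro t ht htd
    show dist (P (rhoK K t)) (P (rhoK K t₀)) < ε
    rw [rhoK_self hK ht₀K]
    rcases le_or_gt t₀ t with h | h
    · -- rhoK K t ∈ [t₀, t]
      have h1 : t₀ ≤ rhoK K t := le_rhoK hK ht₀K h
      have h2 : rhoK K t ≤ t := (rhoK_mem hK ht.1).2
      refine hδ' _ ?_
      rw [Real.dist_eq, abs_sub_lt_iff]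
      rw [Real.dist_eq, abs_sub_lt_iff] at htd
      constructor <;> [linarith [htd.1]; linarith [htd.2]]
    · -- use sigma : sigK K t ∈ [t, t₀]
      rw [P_rho_eq_sig hK ht]
      have h1 : t ≤ sigK K t := (sigK_mem hK ht.2).2
      have h2 : sigK K t ≤ t₀ := sigK_le hK ht₀K h.le
      refine hδ' _ ?_
      rw [Real.dist_eq, abs_sub_lt_iff]
      rw [Real.dist_eq, abs_sub_lt_iff] at htd
      constructor <;> [linarith [htd.1]; linarith [htd.2]]
  · -- t₀ in a gap : locally constant
    have hrt₀ := rhoK_mem hK ht₀.1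
    have hst₀ := sigK_mem hK ht₀.2
    have hlt : rhoK K t₀ < t₀ := lt_of_le_of_ne hrt₀.2 (fun h => ht₀K (h ▸ hrt₀.1))
    have hgt : t₀ < sigK K t₀ := lt_of_le_of_ne hst₀.2 (fun h => ht₀K (h ▸ hst₀.1))
    refine ⟨min (t₀ - rhoK K t₀) (sigK K t₀ - t₀), lt_min (by linarith) (by linarith), ?_⟩
    intro t ht htd
    show dist (P (rhoK K t)) (P (rhoK K t₀)) < ε
    have htmem : t ∈ Ioo (rhoK K t₀) (sigK K t₀) := by
      rw [Real.dist_eq, abs_sub_lt_iff] at htd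
      constructor
      · have := htd.2
        have h2 := min_le_left (t₀ - rhoK K t₀) (sigK K t₀ - t₀)
        linarith
      · have := htd.1
        have h2 := min_le_right (t₀ - rhoK K t₀) (sigK K t₀ - t₀)
        linarith
    have : rhoK K t = rhoK K t₀ := by
      refine le_antisymm ?_ (le_rhoK hK hrt₀.1 htmem.1.le)
      by_contra h
      push_neg at h
      exact gap_rho_sig hK ht₀ (rhoK_mem hK ht.1).1 h
        (lt_of_le_of_lt (rhoK_mem hK ht.1).2 htmem.2)
    rw [this]
    simp [hε]

/-- Minimality : if `P` takes equal values at two points of `K`, the open interval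
between them misses `K`. -/
lemma star_of_minimal (hmin : ∀ K' ∈ pathFam P, K' ⊆ K → K' = K)
    {s t : ℝ} (hs : s ∈ K) (ht : t ∈ K) (hst : s < t) (hPst : P s = P t) :
    K ∩ Ioo s t = ∅ := by
  by_contra h
  obtain ⟨u, huK, hu⟩ := nonempty_iff_ne_empty.2 h
  have hs0 : 0 ≤ s := (hK.1 hs).1
  have ht1 : t ≤ 1 := (hK.1 ht).2
  set K' : Set ℝ := K \ Ioo s t with hK'_def
  have hK' : K' ∈ pathFam P := by
    refine ⟨(diff_subset).trans hK.1, hK.2.1.sdiff isOpen_Ioo, ⟨hK.2.2.1, ?_⟩,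
      ⟨hK.2.2.2.1, ?_⟩, ?_⟩
    · rintro ⟨h1, -⟩; linarith
    · rintro ⟨-, h2⟩; linarith
    · intro a ha b hb hab hgap
      by_cases hcase : K ∩ Ioo a b = ∅
      · exact hK.2.2.2.2 a ha.1 b hb.1 hab hcase
      · obtain ⟨v, hvK, hv⟩ := nonempty_iff_ne_empty.2 hcase
        have hvst : v ∈ Ioo s t := by
          by_contra hv'
          have : v ∈ K' ∩ Ioo a b := ⟨⟨hvK, hv'⟩, hv⟩
          rw [hgap] at this
          exact this
        have hsK' : s ∈ K' := ⟨hs, fun h => lt_irrefl s h.1⟩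
        have htK' : t ∈ K' := ⟨ht, fun h => lt_irrefl t h.2⟩
        have hsab : s ∉ Ioo a b := fun h => by
          have : s ∈ K' ∩ Ioo a b := ⟨hsK', h⟩
          rw [hgap] at this; exact this
        have htab : t ∉ Ioo a b := fun h => by
          have : t ∈ K' ∩ Ioo a b := ⟨htK', h⟩
          rw [hgap] at this; exact this
        have hsa : s ≤ a := by
          by_contra hcon
          push_neg at hcon
          have hsb : b ≤ s := by
            by_contra h2
            push_neg at h2
            exact hsab ⟨hcon, h2⟩
          linarith [hv.2, hvst.1]
        have hbt : b ≤ t := by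
          by_contra hcon
          push_neg at hcon
          have hta : t ≤ a := by
            by_contra h2
            push_neg at h2
            exact htab ⟨h2, hcon⟩
          linarith [hv.1, hvst.2]
        have ha' : a = s := by
          rcases eq_or_lt_of_le hsa with h | h
          · exact h.symm
          · exact absurd ⟨h, lt_of_lt_of_le (hv.1.trans hv.2) hbt⟩ ha.2
        have hb' : b = t := by
          rcases eq_or_lt_of_le hbt with h | h
          · exact h
          · exact absurd ⟨lt_of_le_of_lt hsa hv.1 |>.trans hv.2 |> fun hh => hh, h⟩ hb.2
        rw [ha', hb']
        exact hPst
  have := hmin K' hK' diff_subset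
  have : u ∈ K' := this ▸ huK
  exact this.2 hu

/-- Points of `K` in the open unit interval are accumulation points of `K`. -/
lemma no_isolated (hmin : ∀ K' ∈ pathFam P, K' ⊆ K → K' = K)
    {x : ℝ} (hx : x ∈ K) (hx0 : 0 < x) (hx1 : x < 1) :
    AccPt x (Filter.principal K) := by
  rw [accPt_iff_nhds]
  intro U hU
  by_contra hcon
  push_neg at hcon
  obtain ⟨ε₀, hε₀, hball⟩ := Metric.mem_nhds_iff.1 hU
  set ε : ℝ := min ε₀ (min x (1 - x)) with hε_def
  have hε : 0 < ε := lt_min hε₀ (lt_min hx0 (by linarith))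
  have hεx : ε ≤ x := (min_le_right _ _).trans (min_le_left _ _)
  have hεx1 : x + ε ≤ 1 := by
    have := (min_le_right ε₀ (min x (1-x))).trans (min_le_right x (1-x))
    linarith
  have hiso : ∀ y ∈ K, y ≠ x → ε ≤ |y - x| := by
    intro y hy hyx
    by_contra h2
    push_neg at h2
    apply hyx
    refine hcon y ⟨hball ?_, hy⟩
    rw [Metric.mem_ball, Real.dist_eq]
    exact lt_of_lt_of_le h2 (min_le_left _ _)
  have ha := rhoK_mem hK (t := x - ε) (by linarith)
  have hb := sigK_mem hK (t := x + ε) hεx1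
  have hgapa : K ∩ Ioo (rhoK K (x - ε)) x = ∅ := by
    rw [eq_empty_iff_forall_notMem]
    rintro z ⟨hz, h1, h2⟩
    have h3 := hiso z hz (ne_of_lt h2)
    rw [abs_of_neg (by linarith : z - x < 0)] at h3
    exact absurd (le_rhoK hK hz (by linarith)) (not_le.2 h1)
  have hgapb : K ∩ Ioo x (sigK K (x + ε)) = ∅ := by
    rw [eq_empty_iff_forall_notMem]
    rintro z ⟨hz, h1, h2⟩
    have h3 := hiso z hz (ne_of_gt h1)
    rw [abs_of_pos (by linarith : 0 < z - x)] at h3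
    exact absurd (sigK_le hK hz (by linarith)) (not_le.2 h2)
  have hPa : P (rhoK K (x - ε)) = P x :=
    hK.2.2.2.2 _ ha.1 _ hx (by linarith [ha.2]) hgapa
  have hPb : P x = P (sigK K (x + ε)) :=
    hK.2.2.2.2 _ hx _ hb.1 (by linarith [hb.2]) hgapb
  have hstar := star_of_minimal hK hmin ha.1 hb.1
    (by linarith [ha.2, hb.2]) (hPa.trans hPb)
  rw [eq_empty_iff_forall_notMem] at hstar
  exact hstar x ⟨hx, by linarith [ha.2], by linarith [hb.2]⟩

end KFacts

lemma not_countable_nat_bool : ¬ Countable (ℕ → Bool) := by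
  intro h
  haveI : Nonempty (ℕ → Bool) := ⟨fun _ => true⟩
  obtain ⟨f, hf⟩ := exists_surjective_nat (ℕ → Bool)
  obtain ⟨m, hm⟩ := hf (fun n => ! f n n)
  have := congrFun hm m
  simp at this

open MeasureTheory in
/-- On any rational portion of `K`, there is an atomless probability measure
supported inside that portion of `K`. -/
lemma exists_measure_on_portion {K : Set ℝ} (hKcl : IsClosed K)
    (hacc : ∀ x ∈ K, 0 < x → x < 1 → AccPt x (Filter.principal K))
    {q q' : ℝ} (h0 : 0 ≤ q) (h1 : q' ≤ 1) (hqq : q < q')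
    (hne : (K ∩ Ioo q q').Nonempty) :
    ∃ m : Measure ℝ, m univ = 1 ∧
      (∀ A : Set ℝ, MeasurableSet A → A ∩ (K ∩ Icc q q') = ∅ → m A = 0) ∧
      ∀ x : ℝ, m {x} = 0 := by
  set S : Set ℝ := K ∩ Ioo q q' with hS_def
  have hSpre : Preperfect S := by
    intro x hxS
    rw [accPt_iff_nhds]
    intro U hU
    have hU' : U ∩ Ioo q q' ∈ nhds x := Filter.inter_mem hU (isOpen_Ioo.mem_nhds hxS.2)
    have hx0 : 0 < x := lt_of_le_of_lt h0 hxS.2.1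
    have hx1 : x < 1 := lt_of_lt_of_le hxS.2.2 h1
    obtain ⟨y, ⟨hyU, hyK⟩, hyx⟩ := accPt_iff_nhds.1 (hacc x hxS.1 hx0 hx1) _ hU'
    exact ⟨y, ⟨hyU.1, hyK, hyU.2⟩, hyx⟩
  have hD : Perfect (closure S) := hSpre.perfect_closure
  have hDne : (closure S).Nonempty := hne.mono subset_closure
  have hDsub : closure S ⊆ K ∩ Icc q q' :=
    closure_minimal (inter_subset_inter_right _ Ioo_subset_Icc_self)
      (hKcl.inter isClosed_Icc)
  obtain ⟨f, hfr, hfc, hfi⟩ := hD.exists_nat_bool_injection hDne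
  have hDunc : ¬ Countable ↥(closure S) := by
    intro h
    apply not_countable_nat_bool
    exact Function.Injective.countable
      (f := fun z : ℕ → Bool => (⟨f z, hfr ⟨z, rfl⟩⟩ : ↥(closure S)))
      (fun a b hab => hfi (congrArg Subtype.val hab))
  haveI : PolishSpace ↥(closure S) := hD.closed.polishSpace
  set e : ↥(closure S) ≃ᵐ ℝ :=
    PolishSpace.measurableEquivOfNotCountable hDunc not_countable
  set φ : ℝ → ℝ := fun r => ((e.symm r : ↥(closure S)) : ℝ) with hφ_def
  have hφm : Measurable φ := measurable_subtype_coe.comp e.symm.measurable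
  refine ⟨Measure.map φ (volume.restrict (Icc (0:ℝ) 1)), ?_, ?_, ?_⟩
  · rw [Measure.map_apply hφm MeasurableSet.univ, preimage_univ,
      Measure.restrict_apply_univ, Real.volume_Icc]
    norm_num
  · intro A hA hAK
    rw [Measure.map_apply hφm hA]
    have : φ ⁻¹' A = ∅ := by
      rw [eq_empty_iff_forall_notMem]
      intro r hr
      have : φ r ∈ A ∩ (K ∩ Icc q q') := ⟨hr, hDsub (e.symm r).2⟩
      rw [hAK] at this
      exact this
    rw [this]
    exact measure_empty
  · intro x
    rw [Measure.map_apply hφm (measurableSet_singleton x)]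
    have hsub : (φ ⁻¹' {x}).Subsingleton := by
      intro r hr r' hr'
      have : e.symm r = e.symm r' := Subtype.val_injective (hr.trans hr'.symm)
      exact e.symm.injective.eq_iff.1 this
    exact hsub.measure_zero _

open MeasureTheory in
lemma exists_good_measure {K : Set ℝ} (hKcl : IsClosed K) (hKsub : K ⊆ Icc 0 1)
    (hacc : ∀ x ∈ K, 0 < x → x < 1 → AccPt x (Filter.principal K)) :
    ∃ μ : Measure ℝ, IsFiniteMeasure μ ∧ (∀ x : ℝ, μ {x} = 0) ∧
      (∀ a b : ℝ, K ∩ Ioo a b = ∅ → μ (Ioo a b) = 0) ∧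
      (∀ s ∈ K, ∀ t ∈ K, s < t → (K ∩ Ioo s t).Nonempty → 0 < μ (Ioo s t)) := by
  set QI : Type := {j : ℚ × ℚ // (0:ℝ) ≤ (j.1:ℝ) ∧ ((j.2:ℝ) ≤ 1) ∧ ((j.1:ℝ) < (j.2:ℝ)) ∧
    (K ∩ Ioo (j.1:ℝ) (j.2:ℝ)).Nonempty} with hQI_def
  choose m hm1 hm2 hm3 using fun j : QI =>
    exists_measure_on_portion hKcl hacc j.2.1 j.2.2.1 j.2.2.2.1 j.2.2.2.2
  obtain ⟨enc, henc⟩ := exists_injective_nat QI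
  set w : QI → ENNReal := fun j => (2:ENNReal)⁻¹ ^ enc j with hw_def
  have hw0 : ∀ j, w j ≠ 0 := fun j =>
    pow_ne_zero _ (ENNReal.inv_ne_zero.2 ENNReal.ofNat_ne_top)
  set μ : Measure ℝ := Measure.sum (fun j => w j • m j) with hμ_def
  have happ : ∀ A : Set ℝ, MeasurableSet A → μ A = ∑' j, w j * m j A := by
    intro A hA
    rw [Measure.sum_apply _ hA]
    simp [Measure.smul_apply, smul_eq_mul]
  refine ⟨μ, ?_, ?_, ?_, ?_⟩
  · constructor
    rw [happ _ MeasurableSet.univ]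
    have h1 : ∑' j, w j * m j univ = ∑' j, w j := by
      congr 1; funext j; rw [hm1 j, mul_one]
    rw [h1]
    calc ∑' j, w j ≤ ∑' n : ℕ, (2:ENNReal)⁻¹ ^ n :=
          ENNReal.tsum_comp_le_tsum_of_injective henc _
      _ = (1 - 2⁻¹)⁻¹ := ENNReal.tsum_geometric _
      _ < ⊤ := by
          rw [ENNReal.one_sub_inv_two, inv_inv]
          exact ENNReal.ofNat_lt_top
  · intro x
    rw [happ _ (measurableSet_singleton x)]
    simp [hm3]
  · intro a b hab
    rw [happ _ measurableSet_Ioo]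
    have : ∀ j, m j (Ioo a b) = 0 := by
      intro j
      refine hm2 j _ measurableSet_Ioo ?_
      rw [eq_empty_iff_forall_notMem]
      rintro x ⟨hx1, hx2, -⟩
      have : x ∈ K ∩ Ioo a b := ⟨hx2, hx1⟩
      rw [hab] at this
      exact this
    simp [this]
  · rintro s hs t ht hst ⟨u, huK, hus, hut⟩
    obtain ⟨q, hq1, hq2⟩ := exists_rat_btwn hus
    obtain ⟨q', hq'1, hq'2⟩ := exists_rat_btwn hut
    have hj : (0:ℝ) ≤ ((q, q').1 : ℚ) ∧ (((q, q').2 : ℚ) : ℝ) ≤ 1 ∧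
        (((q, q').1 : ℚ) : ℝ) < ((q, q').2 : ℚ) ∧
        (K ∩ Ioo (((q, q').1 : ℚ) : ℝ) (((q, q').2 : ℚ) : ℝ)).Nonempty := by
      refine ⟨le_trans (hKsub hs).1 hq1.le, le_trans hq'2.le (hKsub ht).2,
        hq2.trans hq'1, ⟨u, huK, hq2, hq'1⟩⟩
    set j : QI := ⟨(q, q'), hj⟩ with hj_def
    have hmj : (1:ENNReal) ≤ m j (Ioo s t) := by
      have hcompl : m j ((Ioo s t)ᶜ) = 0 := by
        refine hm2 j _ measurableSet_Ioo.compl ?_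
        rw [eq_empty_iff_forall_notMem]
        rintro x ⟨hx1, hx2, hx3⟩
        exact hx1 ⟨lt_of_lt_of_le hq1 hx3.1, lt_of_le_of_lt hx3.2 hq'2⟩
      have := measure_union_le (μ := m j) (Ioo s t) ((Ioo s t)ᶜ)
      rw [union_compl_self, hcompl, add_zero, hm1 j] at this
      exact this
    have hle : (w j • m j) (Ioo s t) ≤ μ (Ioo s t) :=
      Measure.le_iff'.1 (Measure.le_sum (fun j => w j • m j) j) _
    have : 0 < (w j • m j) (Ioo s t) := by
      rw [Measure.smul_apply, smul_eq_mul]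
      exact ENNReal.mul_pos (hw0 j) (fun h => by simp [h] at hmj)
    exact lt_of_lt_of_le this hle

open MeasureTheory unitInterval in
/-- The main construction: from a continuous `P : ℝ → X` with `P 0 ≠ P 1`, an
injective path from `P 0` to `P 1` through values of `P` on `[0,1]`. -/
lemma main_construction {P : ℝ → X} (hP : Continuous P) (hne01 : P 0 ≠ P 1) :
    ∃ Q : I → X, Continuous Q ∧ Function.Injective Q ∧
      Q 0 = P 0 ∧ Q 1 = P 1 ∧ ∀ u, ∃ t ∈ Icc (0:ℝ) 1, Q u = P t := by
  obtain ⟨K, hK, hmin⟩ := pathFam_exists_minimal hP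
  have hacc : ∀ x ∈ K, 0 < x → x < 1 → AccPt x (Filter.principal K) :=
    fun x hx h0 h1 => no_isolated hK hmin hx h0 h1
  obtain ⟨μ, hfin, hat, hgapnull, hpos⟩ := exists_good_measure hK.2.1 hK.1 hacc
  haveI : IsFiniteMeasure μ := hfin
  set f : ℝ → ℝ := fun t => (μ (Icc 0 t)).toReal with hf_def
  have hf0 : f 0 = 0 := by
    simp only [hf_def, Icc_self]
    rw [hat 0]
    rfl
  have hfmono : ∀ {s t : ℝ}, s ≤ t → f s ≤ f t := by
    intro s t hst
    exact ENNReal.toReal_mono (measure_ne_top μ _) (measure_mono (Icc_subset_Icc_right hst))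
  have hfnonneg : ∀ t, 0 ≤ f t := fun t => ENNReal.toReal_nonneg
  have feq : ∀ {s t : ℝ}, 0 ≤ s → s ≤ t → f t = f s + (μ (Ioc s t)).toReal := by
    intro s t h0 hst
    have hU : Icc 0 s ∪ Ioc s t = Icc 0 t := Icc_union_Ioc_eq_Icc h0 hst
    have hdisj : Disjoint (Icc (0:ℝ) s) (Ioc s t) := by
      rw [Set.disjoint_left]
      rintro x ⟨-, hx2⟩ ⟨hx3, -⟩
      exact absurd hx2 (not_le.2 hx3)
    have := measure_union (μ := μ) hdisj measurableSet_Ioc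
    rw [hU] at this
    rw [hf_def]
    simp only
    rw [this, ENNReal.toReal_add (measure_ne_top μ _) (measure_ne_top μ _)]
  have hμIoc : ∀ {s t : ℝ}, 0 ≤ s → s ≤ t → f s = f t → μ (Ioc s t) = 0 := by
    intro s t h0 hst hf
    have h1 := feq h0 hst
    rw [← hf] at h1
    have h2 : (μ (Ioc s t)).toReal = 0 := by linarith
    rcases (ENNReal.toReal_eq_zero_iff _).1 h2 with h | h
    · exact h
    · exact absurd h (measure_ne_top μ _)
  -- continuity of f on [0,1]
  have hfcont : ContinuousOn f (Icc (0:ℝ) 1) := by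
    intro t₀ ht₀
    rw [Metric.continuousWithinAt_iff]
    intro ε hε
    set s : ℕ → Set ℝ := fun n => Ioc (t₀ - 1/(n+1)) (t₀ + 1/(n+1)) with hs_def
    have hanti : Antitone s := by
      intro m n hmn
      have h1 : (1:ℝ)/(n+1) ≤ 1/(m+1) := by
        apply div_le_div_of_nonneg_left one_pos.le (by positivity)
        exact_mod_cast by omega
      exact Ioc_subset_Ioc (by linarith) (by linarith)
    have hiInter : ⋂ n, s n = {t₀} := by
      ext x
      simp only [mem_iInter, mem_Ioc, mem_singleton_iff]
      constructor
      · intro h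
        have h1 : x ≤ t₀ := by
          by_contra hc
          push_neg at hc
          obtain ⟨n, hn⟩ := exists_nat_one_div_lt (by linarith : (0:ℝ) < x - t₀)
          linarith [(h n).2]
        have h2 : t₀ ≤ x := by
          by_contra hc
          push_neg at hc
          obtain ⟨n, hn⟩ := exists_nat_one_div_lt (by linarith : (0:ℝ) < t₀ - x)
          linarith [(h n).1]
        linarith
      · rintro rfl
        intro n
        constructor
        · have : (0:ℝ) < 1/(n+1) := by positivity
          linarith
        · have : (0:ℝ) < 1/(n+1) := by positivity
          linarith
    have htend := tendsto_measure_iInter_atTop (μ := μ) (s := s)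
      (fun n => measurableSet_Ioc.nullMeasurableSet) hanti ⟨0, measure_ne_top μ _⟩
    rw [hiInter, hat t₀] at htend
    obtain ⟨n, hn⟩ := (htend.eventually (gt_mem_nhds (ENNReal.ofReal_pos.2 hε))).exists
    refine ⟨1/(n+1), by positivity, ?_⟩
    intro t ht htd
    rw [Real.dist_eq, abs_sub_lt_iff] at htd
    have hbound : ∀ {u v : ℝ}, 0 ≤ u → u ≤ v → Ioc u v ⊆ s n →
        |f v - f u| < ε := by
      intro u v h0 huv hsub
      rw [feq h0 huv, add_sub_cancel_left, abs_of_nonneg ENNReal.toReal_nonneg]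
      have h3 : μ (Ioc u v) ≤ μ (s n) := measure_mono hsub
      have h4 : μ (Ioc u v) < ENNReal.ofReal ε := lt_of_le_of_lt h3 hn
      exact (ENNReal.lt_ofReal_iff_toReal_lt (measure_ne_top μ _)).1 h4
    rcases le_total t₀ t with h | h
    · rw [Real.dist_eq]
      exact hbound ht₀.1 h (fun x hx => ⟨by linarith [hx.1], by linarith [hx.2]⟩)
    · rw [Real.dist_eq, abs_sub_comm]
      exact hbound ht.1 h (fun x hx => ⟨by linarith [hx.1], by linarith [hx.2]⟩)
  -- fibers of f are exactly the fibers of t ↦ P (rhoK K t)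
  have hfib1 : ∀ {s t : ℝ}, s ∈ Icc (0:ℝ) 1 → t ∈ Icc (0:ℝ) 1 → f s = f t →
      P (rhoK K s) = P (rhoK K t) := by
    have main : ∀ {s t : ℝ}, s ∈ Icc (0:ℝ) 1 → t ∈ Icc (0:ℝ) 1 → s ≤ t → f s = f t →
        P (rhoK K s) = P (rhoK K t) := by
      intro s t hs ht hst hf
      have hμ0 : μ (Ioc s t) = 0 := hμIoc hs.1 hst hf
      have claim1 : ∀ u v : ℝ, u ∈ K ∩ Icc s t → v ∈ K ∩ Icc s t → u < v →
          K ∩ Ioo u v = ∅ := by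
        intro u v hu hv huv
        by_contra hc
        have := hpos u hu.1 v hv.1 huv (nonempty_iff_ne_empty.2 hc)
        have hsub : Ioo u v ⊆ Ioc s t := fun x hx =>
          ⟨lt_of_le_of_lt hu.2.1 hx.1, le_trans hx.2.le hv.2.2⟩
        have := lt_of_lt_of_le this (measure_mono hsub)
        rw [hμ0] at this
        exact lt_irrefl _ this
      rcases lt_or_ge t (sigK K s) with hcase | hcase
      · -- no points of K in (s, t]; the rho's agree
        have h1 : rhoK K s ≤ rhoK K t :=
          le_rhoK hK (rhoK_mem hK hs.1).1 ((rhoK_mem hK hs.1).2.trans hst)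
        have h2 : rhoK K t ≤ rhoK K s := by
          refine le_rhoK hK (rhoK_mem hK ht.1).1 ?_
          by_contra hc
          push_neg at hc
          have h3 := sigK_le hK (rhoK_mem hK ht.1).1 hc.le
          linarith [(rhoK_mem hK ht.1).2]
        rw [le_antisymm h1 h2]
      · -- σ s and ρ t both lie in K ∩ [s,t]
        have hu₀ := sigK_mem hK (t := s) hs.2
        have hu₀' : sigK K s ∈ K ∩ Icc s t := ⟨hu₀.1, hu₀.2, hcase⟩
        have hρt : rhoK K t ∈ K ∩ Icc s t := by
          refine ⟨(rhoK_mem hK ht.1).1, ?_, (rhoK_mem hK ht.1).2⟩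
          exact le_trans hu₀.2 (le_rhoK hK hu₀.1 hcase)
        have h1 : P (rhoK K s) = P (sigK K s) := P_rho_eq_sig hK hs
        rcases eq_or_lt_of_le (le_rhoK hK hu₀.1 hcase) with h | h
        · rw [h1, h]
        · rw [h1]
          exact hK.2.2.2.2 _ hu₀.1 _ hρt.1 h (claim1 _ _ hu₀' hρt h)
    intro s t hs ht hf
    rcases le_total s t with h | h
    · exact main hs ht h hf
    · exact (main ht hs h hf.symm).symm
  have hfib2 : ∀ {s t : ℝ}, s ∈ Icc (0:ℝ) 1 → t ∈ Icc (0:ℝ) 1 → s ≤ t →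
      P (rhoK K s) = P (rhoK K t) → f s = f t := by
    intro s t hs ht hst hPeq
    rcases eq_or_lt_of_le hst with rfl | hlt
    · rfl
    have hμ : μ (Ioc s t) = 0 := by
      have hρρ : rhoK K s ≤ rhoK K t :=
        le_rhoK hK (rhoK_mem hK hs.1).1 ((rhoK_mem hK hs.1).2.trans hst)
      have hgap2 : K ∩ Ioo (rhoK K t) t = ∅ := by
        rw [eq_empty_iff_forall_notMem]
        rintro x ⟨hx, h1, h2⟩
        exact absurd (le_rhoK hK hx h2.le) (not_le.2 h1)
      rcases eq_or_lt_of_le hρρ with heq | hltρ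
      · -- K ∩ (s,t] = ∅
        have hKempty : K ∩ Ioo s t = ∅ := by
          rw [eq_empty_iff_forall_notMem]
          rintro x ⟨hx, h1, h2⟩
          have := le_rhoK hK hx h2.le
          rw [← heq] at this
          linarith [(rhoK_mem hK hs.1).2]
        have h1 : μ (Ioo s t) = 0 := hgapnull _ _ hKempty
        have h2 : Ioc s t ⊆ Ioo s t ∪ {t} := by
          rintro x ⟨hx1, hx2⟩
          rcases eq_or_lt_of_le hx2 with rfl | h
          · exact Or.inr rfl
          · exact Or.inl ⟨hx1, h⟩
        refine le_antisymm ?_ zero_le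
        calc μ (Ioc s t) ≤ μ (Ioo s t ∪ {t}) := measure_mono h2
          _ ≤ μ (Ioo s t) + μ {t} := measure_union_le _ _
          _ = 0 := by rw [h1, hat t, add_zero]
        -- need le_antisymm with zero_le
      · have hstar := star_of_minimal hK hmin (rhoK_mem hK hs.1).1 (rhoK_mem hK ht.1).1
          hltρ hPeq
        have h1 : μ (Ioo (rhoK K s) (rhoK K t)) = 0 := hgapnull _ _ hstar
        have h2 : μ (Ioo (rhoK K t) t) = 0 := hgapnull _ _ hgap2
        have hsub : Ioc s t ⊆ Ioo (rhoK K s) (rhoK K t) ∪ ({rhoK K t} ∪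
            (Ioo (rhoK K t) t ∪ {t})) := by
          rintro x ⟨hx1, hx2⟩
          have hx3 : rhoK K s < x := lt_of_le_of_lt (rhoK_mem hK hs.1).2 hx1
          rcases lt_trichotomy x (rhoK K t) with h | h | h
          · exact Or.inl ⟨hx3, h⟩
          · exact Or.inr (Or.inl h)
          · rcases eq_or_lt_of_le hx2 with rfl | h'
            · exact Or.inr (Or.inr (Or.inr rfl))
            · exact Or.inr (Or.inr (Or.inl ⟨h, h'⟩))
        refine le_antisymm ?_ zero_le
        calc μ (Ioc s t) ≤ _ := measure_mono hsub
          _ ≤ μ (Ioo (rhoK K s) (rhoK K t)) + (μ {rhoK K t} +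
              (μ (Ioo (rhoK K t) t) + μ {t})) := by
            refine le_trans (measure_union_le _ _) ?_
            gcongr
            refine le_trans (measure_union_le _ _) ?_
            gcongr
            exact measure_union_le _ _
          _ = 0 := by rw [h1, h2, hat, hat, add_zero, add_zero, add_zero]
    have := feq hs.1 hst
    rw [hμ] at this
    simp at this
    linarith
  -- final construction
  have h0K : (0:ℝ) ∈ K := hK.2.2.1
  have h1K : (1:ℝ) ∈ K := hK.2.2.2.1
  set d : ℝ := f 1 with hd_def
  have hdpos : 0 < d := by
    rcases lt_or_eq_of_le (hfnonneg 1) with h | h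
    · exact h
    · exfalso
      have h2 := hfib1 (left_mem_Icc.2 zero_le_one) (right_mem_Icc.2 zero_le_one)
        (by rw [hf0]; exact h)
      rw [rhoK_self hK h0K, rhoK_self hK h1K] at h2
      exact hne01 h2
  set F : I → I := fun u => ⟨f u.1 / d,
    div_nonneg (hfnonneg _) hdpos.le,
    (div_le_one hdpos).2 (hd_def ▸ hfmono u.2.2)⟩ with hF_def
  have hFcont : Continuous F := by
    refine Continuous.subtype_mk ?_ _
    exact (hfcont.comp_continuous continuous_subtype_val (fun u => u.2)).div_const d
  have hFsurj : Function.Surjective F := by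
    intro u
    have hmem : d * u.1 ∈ Icc (f 0) (f 1) := by
      constructor
      · rw [hf0]
        exact mul_nonneg hdpos.le u.2.1
      · rw [← hd_def]
        exact mul_le_of_le_one_right hdpos.le u.2.2
    obtain ⟨s, hsmem, hfs⟩ := intermediate_value_Icc zero_le_one hfcont hmem
    refine ⟨⟨s, hsmem⟩, Subtype.ext ?_⟩
    show f s / d = u.1
    rw [hfs]
    field_simp
  set sec : I → I := Function.surjInv hFsurj with hsec_def
  have hsec : ∀ u, F (sec u) = u := fun u => Function.surjInv_eq hFsurj u
  set g' : I → X := fun t => P (rhoK K t.1) with hg'_def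
  have hg'cont : Continuous g' :=
    (g_continuousOn hK hP).comp_continuous continuous_subtype_val (fun t => t.2)
  have hfeqF : ∀ {t u : I}, F t = F u → f t.1 = f u.1 := by
    intro t u h
    have h2 := congrArg Subtype.val h
    simp only [hF_def] at h2
    field_simp [ne_of_gt hdpos] at h2
    exact h2
  set Q : I → X := fun u => g' (sec u) with hQ_def
  have hQF : ∀ t : I, Q (F t) = g' t := by
    intro t
    show g' (sec (F t)) = g' t
    exact hfib1 (sec (F t)).2 t.2 (hfeqF (hsec (F t)))
  have hQcont : Continuous Q := by
    have hqm := (hFcont.isClosedMap).isQuotientMap hFcont hFsurj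
    have hcomp : Q ∘ F = g' := funext hQF
    rw [hqm.continuous_iff, hcomp]
    exact hg'cont
  have hQinj : Function.Injective Q := by
    intro u v h
    have h2 : f (sec u).1 = f (sec v).1 := by
      rcases le_total (sec u).1 (sec v).1 with hle | hle
      · exact hfib2 (sec u).2 (sec v).2 hle h
      · exact (hfib2 (sec v).2 (sec u).2 hle h.symm).symm
    have h3 : F (sec u) = F (sec v) := Subtype.ext (by show f _ / d = f _ / d; rw [h2])
    rw [hsec u, hsec v] at h3
    exact h3
  have hQ0 : Q 0 = P 0 := by
    have hF0 : F 0 = 0 := by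
      refine Subtype.ext ?_
      show f ((0:I):ℝ) / d = ((0:I):ℝ)
      norm_num [hf0]
    rw [← hF0, hQF]
    show P (rhoK K ((0:I):ℝ)) = P 0
    norm_num [rhoK_self hK h0K]
  have hQ1 : Q 1 = P 1 := by
    have hF1 : F 1 = 1 := by
      refine Subtype.ext ?_
      show f ((1:I):ℝ) / d = ((1:I):ℝ)
      norm_num [← hd_def, div_self (ne_of_gt hdpos)]
    rw [← hF1, hQF]
    show P (rhoK K ((1:I):ℝ)) = P 1
    norm_num [rhoK_self hK h1K]
  exact ⟨Q, hQcont, hQinj, hQ0, hQ1,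
    fun u => ⟨rhoK K (sec u).1, hK.1 (rhoK_mem hK (sec u).2.1).1, rfl⟩⟩

open unitInterval in
/-- Arc extraction: every path between distinct points in a metric space contains an
injective path between the same endpoints. -/
lemma exists_injective_path {a b : X} (p : Path a b) (hab : a ≠ b) :
    ∃ q : Path a b, Function.Injective ⇑q ∧ range ⇑q ⊆ range ⇑p := by
  have hP : Continuous p.extend := p.continuous_extend
  have hne : p.extend 0 ≠ p.extend 1 := by
    rw [Path.extend_zero, Path.extend_one]
    exact hab
  obtain ⟨Q, hc, hi, h0, h1, hr⟩ := main_construction hP hne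
  rw [Path.extend_zero] at h0
  rw [Path.extend_one] at h1
  refine ⟨⟨⟨Q, hc⟩, h0, h1⟩, hi, ?_⟩
  rintro _ ⟨u, rfl⟩
  obtain ⟨t, ht, hQ⟩ := hr u
  exact ⟨⟨t, ht⟩, by rw [← Path.extend_apply p ht]; exact hQ.symm⟩


end ArcExtraction

open Set unitInterval in
theorem firstPointMap_image_path_subset
    (X : Type) [MetricSpace X] [CompactSpace X] [ConnectedSpace X]
    [LocallyConnectedSpace X] (hdim : CovDimLE X 1)
    (Y : Set X) (hYc : IsClosed Y) (hYconn : IsPreconnected Y) (hYne : Y.Nonempty)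
    (hcore : ∃ K : Set X, K ⊆ Y ∧ IsStrongDeformationRetract X K ∧
      ∀ D ⊆ K, IsDeformationRetractSet X D → D = K)
    (r : X → X) (hrc : Continuous r) (hrY : ∀ x, r x ∈ Y)
    (hrfix : ∀ y ∈ Y, r y = y)
    (hfp : ∀ x ∉ Y, ∀ z ∈ Y, ∀ p : Path x z, Function.Injective ⇑p →
      r x ∈ Set.range ⇑p)
    (x y : X) (hx : x ∉ Y) (hy : y ∈ Y) (α : Path x y) :
    r '' Set.range ⇑α ⊆ Set.range ⇑α := by
  rintro w ⟨-, ⟨t, rfl⟩, rfl⟩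
  by_cases hzY : α t ∈ Y
  · rw [hrfix _ hzY]
    exact ⟨t, rfl⟩
  · set S : Set ℝ := Icc (t:ℝ) 1 ∩ α.extend ⁻¹' Y with hS_def
    have hScl : IsClosed S := isClosed_Icc.inter (hYc.preimage α.continuous_extend)
    have h1S : (1:ℝ) ∈ S := ⟨⟨t.2.2, le_refl 1⟩, by
      simp only [mem_preimage, Path.extend_one]
      exact hy⟩
    have hbdd : BddBelow S := bddBelow_Icc.mono inter_subset_left
    set s₀ : ℝ := sInf S with hs₀_def
    have hs₀S : s₀ ∈ S := hScl.csInf_mem ⟨1, h1S⟩ hbdd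
    have hts₀ : (t:ℝ) ≤ s₀ := hs₀S.1.1
    have hs₀1 : s₀ ≤ 1 := hs₀S.1.2
    have hw'Y : α.extend s₀ ∈ Y := hs₀S.2
    have hzw : α t ≠ α.extend s₀ := fun h => hzY (h ▸ hw'Y)
    set B : Path (α t) (α.extend s₀) :=
      { toFun := fun u => α.extend ((t:ℝ) + (u:ℝ) * (s₀ - (t:ℝ)))
        continuous_toFun := α.continuous_extend.comp
          (by fun_prop)
        source' := by
          simp only [Icc.coe_zero, zero_mul, add_zero]
          exact α.extend_extends' t
        target' := by
          simp only [Icc.coe_one, one_mul]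
          norm_num } with hB_def
    obtain ⟨q, hqinj, hqr⟩ := exists_injective_path B hzw
    obtain ⟨v, hv⟩ := hqr (hfp (α t) hzY (α.extend s₀) hw'Y q hqinj)
    have hc : (t:ℝ) + (v:ℝ) * (s₀ - (t:ℝ)) ∈ Icc (0:ℝ) 1 := by
      constructor
      · exact add_nonneg t.2.1 (mul_nonneg v.2.1 (by linarith))
      · have h2 : (v:ℝ) * (s₀ - (t:ℝ)) ≤ s₀ - (t:ℝ) :=
          mul_le_of_le_one_left (by linarith) v.2.2
        linarith
    refine ⟨⟨_, hc⟩, ?_⟩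
    rw [← Path.extend_apply α hc]
    exact hv
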